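/- For all m, n with n > m and every k ≤ n − m, the ℂ-span of all k-th order partial derivatives of the padded permanent ℓ^{n−m}·perm_m has dimension at most Σ_{j=0}^{k} C(m, j)². -/

import Mathlib

/-- Iterated partial derivative with respect to a list of variables. -/
noncomputable def pderivList {σ : Type*} (L : List σ) (P : MvPolynomial σ ℂ) :
    MvPolynomial σ ℂ :=
  L.foldr (fun i q => MvPolynomial.pderiv i q) P

/-- The span of all `M · ∂^k P/∂x^β` with `M` a monomial of degree `τ` and `|β| = k`, i.e.
the degree-`(deg P - k + τ)` graded component of the `k`-th Jacobian ideal of `P`. -/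
noncomputable def shiftedPartialsSpan {σ : Type*} (P : MvPolynomial σ ℂ) (k τ : ℕ) :
    Submodule ℂ (MvPolynomial σ ℂ) :=
  Submodule.span ℂ
    { q | ∃ (L : List σ) (M : σ →₀ ℕ), L.length = k ∧ (M.sum fun _ e => e) = τ ∧
        q = MvPolynomial.monomial M (1 : ℂ) * pderivList L P }

/-- The padded permanent `ℓ^{n−m}·perm_m` in the `m²+1` variables `{y^i_j} ∪ {ℓ}`
(indexed by `(Fin m × Fin m) ⊕ Unit`, with `ℓ` the extra variable). -/
noncomputable def paddedPermSmall (m n : ℕ) :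
    MvPolynomial ((Fin m × Fin m) ⊕ Unit) ℂ :=
  MvPolynomial.X (Sum.inr ()) ^ (n - m) *
    ∑ σ : Equiv.Perm (Fin m), ∏ i : Fin m, MvPolynomial.X (Sum.inl (i, σ i))

namespace PPAux

open MvPolynomial Finset

abbrev VT (m : ℕ) := (Fin m × Fin m) ⊕ Unit

noncomputable def sp (m : ℕ) (A B : Finset (Fin m)) : MvPolynomial (VT m) ℂ :=
  ∑ σ ∈ Finset.univ.filter (fun σ : Equiv.Perm (Fin m) => A.image σ = B),
    ∏ i ∈ Aᶜ, X (Sum.inl (i, σ i))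

/-- Generators for the span of `k`-th partials of the padded permanent. -/
def gens (m n k : ℕ) : Set (MvPolynomial (VT m) ℂ) :=
  { q | ∃ A B : Finset (Fin m), A.card = B.card ∧ A.card ≤ k ∧
      q = X (Sum.inr ()) ^ (n - m - k + A.card) * sp m A B }

lemma pderiv_prod_X {m : ℕ} (x : VT m) (s : Finset (Fin m)) (f : Fin m → VT m) :
    MvPolynomial.pderiv x (∏ i ∈ s, X (f i) : MvPolynomial (VT m) ℂ) =
      ∑ i ∈ s, (if f i = x then (1 : MvPolynomial (VT m) ℂ) else 0) *
        ∏ j ∈ s.erase i, X (f j) := by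
  classical
  induction s using Finset.induction_on with
  | empty => simp
  | @insert a s ha ih =>
    rw [Finset.prod_insert ha, pderiv_mul, ih, Finset.sum_insert ha,
      Finset.erase_insert ha]
    rw [Finset.mul_sum]
    have : ∀ i ∈ s, (if f i = x then (1 : MvPolynomial (VT m) ℂ) else 0) *
        ∏ j ∈ (insert a s).erase i, X (f j) =
        X (f a) * ((if f i = x then 1 else 0) * ∏ j ∈ s.erase i, X (f j)) := by
      intro i hi
      rw [Finset.erase_insert_of_ne (by rintro rfl; exact ha hi),
        Finset.prod_insert (by simp [ha, Finset.mem_erase])]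
      ring
    rw [Finset.sum_congr rfl this]
    have hx : MvPolynomial.pderiv x (X (f a) : MvPolynomial (VT m) ℂ) =
        if f a = x then 1 else 0 := by
      by_cases h : f a = x
      · subst h; simp
      · rw [pderiv_X_of_ne h, if_neg h]
    rw [hx]

lemma sp_pderiv_inr {m : ℕ} (A B : Finset (Fin m)) :
    MvPolynomial.pderiv (Sum.inr () : VT m) (sp m A B) = 0 := by
  unfold sp
  rw [map_sum]
  refine Finset.sum_eq_zero fun σ _ => ?_
  rw [pderiv_prod_X]
  exact Finset.sum_eq_zero fun i _ => by simp

lemma sp_pderiv_inl {m : ℕ} (A B : Finset (Fin m)) (a b : Fin m) :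
    MvPolynomial.pderiv (Sum.inl (a, b) : VT m) (sp m A B) =
      if a ∈ A then 0 else
        ∑ σ ∈ Finset.univ.filter
            (fun σ : Equiv.Perm (Fin m) => A.image σ = B ∧ σ a = b),
          ∏ i ∈ (insert a A)ᶜ, X (Sum.inl (i, σ i)) := by
  classical
  unfold sp
  rw [map_sum]
  have key : ∀ σ : Equiv.Perm (Fin m),
      MvPolynomial.pderiv (Sum.inl (a, b) : VT m)
        (∏ i ∈ Aᶜ, X (Sum.inl (i, σ i)) : MvPolynomial (VT m) ℂ) =
      if a ∈ Aᶜ ∧ σ a = b then ∏ i ∈ (insert a A)ᶜ, X (Sum.inl (i, σ i)) else 0 := by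
    intro σ
    rw [pderiv_prod_X]
    by_cases ha : a ∈ Aᶜ
    · by_cases hb : σ a = b
      · rw [if_pos ⟨ha, hb⟩]
        rw [Finset.sum_eq_single a]
        · rw [if_pos (by rw [hb]), one_mul, Finset.compl_insert]
        · intro i hi hne
          rw [if_neg (by simp [hne]), zero_mul]
        · intro h; exact absurd ha h
      · rw [if_neg (by tauto)]
        refine Finset.sum_eq_zero fun i hi => ?_
        rw [if_neg, zero_mul]
        intro h
        obtain ⟨h1, h2⟩ := Prod.mk.injEq .. ▸ Sum.inl.injEq .. ▸ h
        exact hb (h1 ▸ h2)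
    · rw [if_neg (by tauto)]
      refine Finset.sum_eq_zero fun i hi => ?_
      rw [if_neg, zero_mul]
      intro h
      obtain ⟨h1, h2⟩ := Prod.mk.injEq .. ▸ Sum.inl.injEq .. ▸ h
      subst h1; exact ha hi
  rw [Finset.sum_congr rfl fun σ _ => key σ]
  by_cases haA : a ∈ A
  · rw [if_pos haA]
    refine Finset.sum_eq_zero fun σ _ => ?_
    rw [if_neg (by simp [haA])]
  · rw [if_neg haA, Finset.sum_ite, Finset.sum_const_zero, add_zero,
      Finset.filter_filter]
    apply Finset.sum_congr
    · apply Finset.filter_congr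
      intro σ _
      simp [haA, and_comm]
    · intros; rfl

lemma image_swap_self {m : ℕ} (B : Finset (Fin m)) {b b' : Fin m} (hb : b ∈ B)
    (hb' : b' ∈ B) : B.image (Equiv.swap b' b) = B := by
  classical
  apply Finset.eq_of_subset_of_card_le
  · intro x hx
    obtain ⟨y, hy, rfl⟩ := Finset.mem_image.1 hx
    rcases eq_or_ne y b' with rfl | h1
    · rwa [Equiv.swap_apply_left]
    rcases eq_or_ne y b with rfl | h2
    · rwa [Equiv.swap_apply_right]
    · rwa [Equiv.swap_apply_of_ne_of_ne h1 h2]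
  · rw [Finset.card_image_of_injective _ (Equiv.injective _)]

lemma sigma_not_mem {m : ℕ} {A B : Finset (Fin m)} {σ : Equiv.Perm (Fin m)}
    (hσ : A.image σ = B) {i : Fin m} (hi : i ∈ Aᶜ) : σ i ∉ B := by
  intro hmem
  rw [← hσ] at hmem
  obtain ⟨a₀, ha₀, he⟩ := Finset.mem_image.1 hmem
  exact (Finset.mem_compl.1 hi) (σ.injective he ▸ ha₀)

lemma sp_insert {m : ℕ} {A B : Finset (Fin m)} {a b : Fin m}
    (ha : a ∉ A) (hb : b ∉ B) :
    sp m (insert a A) (insert b B) = (B.card + 1) •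
      ∑ σ ∈ Finset.univ.filter
          (fun σ : Equiv.Perm (Fin m) => A.image σ = B ∧ σ a = b),
        ∏ i ∈ (insert a A)ᶜ, X (Sum.inl (i, σ i)) := by
  classical
  set A' := insert a A
  set B' := insert b B
  set F : Equiv.Perm (Fin m) → MvPolynomial (VT m) ℂ :=
    fun σ => ∏ i ∈ A'ᶜ, X (Sum.inl (i, σ i)) with hF
  have hcond : ∀ σ : Equiv.Perm (Fin m),
      (A.image σ = B ∧ σ a = b) ↔ (A'.image σ = B' ∧ σ a = b) := by
    intro σ
    constructor
    · rintro ⟨h1, h2⟩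
      refine ⟨?_, h2⟩
      rw [Finset.image_insert, h1, h2]
    · rintro ⟨h1, h2⟩
      refine ⟨?_, h2⟩
      rw [Finset.image_insert, h2] at h1
      have hbA : b ∉ A.image σ := by
        intro hmem
        obtain ⟨a₀, ha₀, he⟩ := Finset.mem_image.1 hmem
        exact ha (σ.injective (he.trans h2.symm) ▸ ha₀)
      have := congrArg (fun s => Finset.erase s b) h1
      simpa [B', Finset.erase_insert hbA, Finset.erase_insert hb] using this
  have hfib :
      ∑ b' ∈ B', ∑ σ ∈ (Finset.univ.filter
          (fun σ : Equiv.Perm (Fin m) => A'.image σ = B')).filter (fun σ => σ a = b'),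
        F σ = sp m A' B' := by
    apply Finset.sum_fiberwise_of_maps_to
    intro σ hσ
    rw [Finset.mem_filter] at hσ
    rw [← hσ.2]
    exact Finset.mem_image_of_mem σ (Finset.mem_insert_self a A)
  have hfiber_eq : ∀ b' ∈ B',
      ∑ σ ∈ (Finset.univ.filter
          (fun σ : Equiv.Perm (Fin m) => A'.image σ = B')).filter (fun σ => σ a = b'),
        F σ =
      ∑ σ ∈ (Finset.univ.filter
          (fun σ : Equiv.Perm (Fin m) => A'.image σ = B')).filter (fun σ => σ a = b),
        F σ := by
    intro b' hb'
    have hbB' : b ∈ B' := Finset.mem_insert_self b B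
    apply Finset.sum_bij' (i := fun σ _ => Equiv.swap b' b * σ)
      (j := fun σ _ => Equiv.swap b' b * σ)
    · intro σ hσ
      rw [Finset.mem_filter, Finset.mem_filter] at hσ ⊢
      obtain ⟨⟨-, h1⟩, h2⟩ := hσ
      refine ⟨⟨Finset.mem_univ _, ?_⟩, ?_⟩
      · rw [Equiv.Perm.coe_mul, ← Finset.image_image, h1, image_swap_self _ hbB' hb']
      · simp [h2, Equiv.swap_apply_left]
    · intro σ hσ
      rw [Finset.mem_filter, Finset.mem_filter] at hσ ⊢
      obtain ⟨⟨-, h1⟩, h2⟩ := hσ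
      refine ⟨⟨Finset.mem_univ _, ?_⟩, ?_⟩
      · rw [Equiv.Perm.coe_mul, ← Finset.image_image, h1, image_swap_self _ hbB' hb']
      · simp [h2, Equiv.swap_apply_right]
    · intro σ _; rw [← mul_assoc, Equiv.swap_mul_self, one_mul]
    · intro σ _; rw [← mul_assoc, Equiv.swap_mul_self, one_mul]
    · intro σ hσ
      rw [Finset.mem_filter, Finset.mem_filter] at hσ
      obtain ⟨⟨-, h1⟩, -⟩ := hσ
      refine Finset.prod_congr rfl fun i hi => ?_
      have h3 : σ i ∉ B' := sigma_not_mem h1 hi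
      have : Equiv.swap b' b (σ i) = σ i :=
        Equiv.swap_apply_of_ne_of_ne (fun h => h3 (h ▸ hb')) (fun h => h3 (h ▸ hbB'))
      rw [Equiv.Perm.coe_mul, Function.comp_apply, this]
  have hsum : sp m A' B' = ∑ _b' ∈ B', ∑ σ ∈ (Finset.univ.filter
      (fun σ : Equiv.Perm (Fin m) => A'.image σ = B')).filter (fun σ => σ a = b),
        F σ := by
    rw [← hfib]
    exact Finset.sum_congr rfl hfiber_eq
  rw [hsum, Finset.sum_const, Finset.card_insert_of_notMem hb]
  congr 1
  rw [Finset.filter_filter]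
  apply Finset.sum_congr
  · apply Finset.filter_congr
    intro σ _
    exact (iff_comm.1 (hcond σ))
  · intros; rfl

lemma step {m n k : ℕ} (hk : k + 1 ≤ n - m) (x : VT m)
    {g : MvPolynomial (VT m) ℂ} (hg : g ∈ gens m n k) :
    MvPolynomial.pderiv x g ∈ Submodule.span ℂ (gens m n (k + 1)) := by
  classical
  obtain ⟨A, B, hAB, hAk, rfl⟩ := hg
  set e := n - m - k + A.card with he
  have he1 : 1 ≤ e := by omega
  rw [pderiv_mul]
  cases x with
  | inr u =>
    rw [sp_pderiv_inr, mul_zero, add_zero]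
    rw [pderiv_pow, pderiv_X_self, mul_one]
    have hgen : (X (Sum.inr ()) ^ (e - 1) * sp m A B : MvPolynomial (VT m) ℂ) ∈
        gens m n (k + 1) := by
      refine ⟨A, B, hAB, by omega, ?_⟩
      congr 2
      omega
    have : ((e : MvPolynomial (VT m) ℂ) * X (Sum.inr ()) ^ (e - 1)) * sp m A B =
        (e : ℂ) • (X (Sum.inr ()) ^ (e - 1) * sp m A B) := by
      rw [smul_eq_C_mul, ← mul_assoc]
      norm_cast
    rw [this]
    exact Submodule.smul_mem _ _ (Submodule.subset_span hgen)
  | inl p =>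
    obtain ⟨a, b⟩ := p
    rw [pderiv_pow, pderiv_X_of_ne (by simp), mul_zero, zero_mul, zero_add]
    by_cases haA : a ∈ A
    · rw [sp_pderiv_inl, if_pos haA, mul_zero]
      exact Submodule.zero_mem _
    · rw [sp_pderiv_inl, if_neg haA]
      by_cases hbB : b ∈ B
      · have : (Finset.univ.filter
            (fun σ : Equiv.Perm (Fin m) => A.image σ = B ∧ σ a = b)) = ∅ := by
          rw [Finset.filter_eq_empty_iff]
          rintro σ - ⟨h1, h2⟩
          exact sigma_not_mem h1 (Finset.mem_compl.2 haA) (h2 ▸ hbB)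
        rw [this, Finset.sum_empty, mul_zero]
        exact Submodule.zero_mem _
      · set D := ∑ σ ∈ Finset.univ.filter
            (fun σ : Equiv.Perm (Fin m) => A.image σ = B ∧ σ a = b),
            ∏ i ∈ (insert a A)ᶜ, (X (Sum.inl (i, σ i)) : MvPolynomial (VT m) ℂ) with hD
        have hins := sp_insert (m := m) haA hbB
        have hc0 : ((B.card + 1 : ℕ) : ℂ) ≠ 0 := by
          exact_mod_cast Nat.succ_ne_zero B.card
        have hDeq : D = (((B.card + 1 : ℕ) : ℂ))⁻¹ • sp m (insert a A) (insert b B) := by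
          rw [hins, ← Nat.cast_smul_eq_nsmul ℂ, smul_smul, inv_mul_cancel₀ hc0, one_smul]
        have hgen : (X (Sum.inr ()) ^ (n - m - (k + 1) + (insert a A).card) *
            sp m (insert a A) (insert b B) : MvPolynomial (VT m) ℂ) ∈ gens m n (k + 1) := by
          exact ⟨insert a A, insert b B, by
            rw [Finset.card_insert_of_notMem haA, Finset.card_insert_of_notMem hbB, hAB],
            by rw [Finset.card_insert_of_notMem haA]; omega, rfl⟩
        have hexp : n - m - (k + 1) + (insert a A).card = e := by
          rw [Finset.card_insert_of_notMem haA]; omega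
        rw [hDeq, mul_smul_comm]
        refine Submodule.smul_mem _ _ (Submodule.subset_span ?_)
        rw [← hexp]
        exact hgen

lemma base {m n : ℕ} : paddedPermSmall m n ∈ gens m n 0 := by
  classical
  refine ⟨∅, ∅, rfl, le_refl 0, ?_⟩
  unfold paddedPermSmall sp
  have h1 : (Finset.univ.filter
      (fun σ : Equiv.Perm (Fin m) => (∅ : Finset (Fin m)).image σ = ∅)) = Finset.univ := by
    apply Finset.filter_true_of_mem
    intro σ _
    exact Finset.image_empty _
  rw [h1, Finset.compl_empty]
  simp

lemma pderivList_mem {m n : ℕ} (L : List (VT m)) (hL : L.length ≤ n - m) :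
    pderivList L (paddedPermSmall m n) ∈ Submodule.span ℂ (gens m n L.length) := by
  induction L with
  | nil => exact Submodule.subset_span base
  | cons x L ih =>
    have h1 : L.length ≤ n - m := by
      have := hL; simp only [List.length_cons] at this; omega
    have hmem := ih h1
    have hmap : Submodule.map (MvPolynomial.pderiv x).toLinearMap
        (Submodule.span ℂ (gens m n L.length)) ≤
        Submodule.span ℂ (gens m n (L.length + 1)) := by
      rw [Submodule.map_span, Submodule.span_le]
      rintro q ⟨g, hg, rfl⟩
      refine step ?_ x hg
      simpa using hL
    exact hmap ⟨_, hmem, rfl⟩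

end PPAux

/-- For `n > m` and `k ≤ n−m`, the ℂ-span of all `k`-th order partial derivatives of the
padded permanent `ℓ^{n−m}·perm_m` has dimension at most `Σ_{j=0}^{k} C(m, j)²`. -/
theorem padded_permanent_partials_upper_bound (m n : ℕ) (hmn : m < n) :
    ∀ k : ℕ, k ≤ n - m →
      Module.finrank ℂ (shiftedPartialsSpan (paddedPermSmall m n) k 0) ≤
        ∑ j ∈ Finset.range (k + 1), Nat.choose m j ^ 2 := by
  classical
  intro k hk
  open PPAux Finset MvPolynomial in
  -- finite generating family
  let T : Finset (Finset (Fin m) × Finset (Fin m)) :=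
    (Finset.range (k + 1)).biUnion
      (fun j => Finset.powersetCard j Finset.univ ×ˢ Finset.powersetCard j Finset.univ)
  let φ : Finset (Fin m) × Finset (Fin m) → MvPolynomial (VT m) ℂ :=
    fun p => X (Sum.inr ()) ^ (n - m - k + p.1.card) * sp m p.1 p.2
  set S : Finset (MvPolynomial (VT m) ℂ) := T.image φ with hS
  have hgsub : gens m n k ⊆ ↑S := by
    rintro q ⟨A, B, h1, h2, rfl⟩
    refine Finset.mem_coe.2 (Finset.mem_image.2 ⟨(A, B), ?_, rfl⟩)
    refine Finset.mem_biUnion.2 ⟨A.card, Finset.mem_range.2 (by omega), ?_⟩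
    refine Finset.mem_product.2 ⟨?_, ?_⟩
    · exact Finset.mem_powersetCard.2 ⟨Finset.subset_univ _, rfl⟩
    · exact Finset.mem_powersetCard.2 ⟨Finset.subset_univ _, h1.symm⟩
  have hle : shiftedPartialsSpan (paddedPermSmall m n) k 0 ≤
      Submodule.span ℂ (S : Set (MvPolynomial (VT m) ℂ)) := by
    refine le_trans ?_ (Submodule.span_mono hgsub)
    unfold shiftedPartialsSpan
    rw [Submodule.span_le]
    rintro q ⟨L, M, hL, hM, rfl⟩
    have hM0 : M = 0 := by
      rw [Finsupp.sum] at hM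
      ext s
      simp only [Finsupp.coe_zero, Pi.zero_apply]
      by_contra hs
      exact hs (Finset.sum_eq_zero_iff.1 hM s (Finsupp.mem_support_iff.2 hs))
    rw [hM0]
    have : (MvPolynomial.monomial (0 : ((Fin m × Fin m) ⊕ Unit) →₀ ℕ) (1 : ℂ)) = 1 := by
      rw [MvPolynomial.monomial_zero']
      exact map_one _
    rw [this, one_mul]
    exact hL ▸ pderivList_mem L (hL ▸ hk)
  haveI hFD : FiniteDimensional ℂ
      (Submodule.span ℂ (S : Set (MvPolynomial (VT m) ℂ))) :=
    FiniteDimensional.span_finset ℂ S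
  refine le_trans (Submodule.finrank_mono hle) ?_
  refine (finrank_span_finset_le_card S).trans ?_
  rw [hS]
  refine (Finset.card_image_le).trans ?_
  refine (Finset.card_biUnion_le).trans ?_
  refine Finset.sum_le_sum fun j _ => ?_
  rw [Finset.card_product, Finset.card_powersetCard, Finset.card_univ,
    Fintype.card_fin, sq]
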